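/- Let P be an (m+1)×(d+1) nonnegative matrix with columns summing to 1, viewed as a linear map from the subspace of ℝ^{d+1} of vectors with coordinate sum 0 to the subspace of ℝ^{m+1} of vectors with coordinate sum 0, with the ℓ¹ norm. Suppose there exists θ > 0 such that for every pair of columns j₁, j₂ there is a row i₀ with P_{i₀j₁} ≥ θ and P_{i₀j₂} ≥ θ. Then ‖Pa‖₁ ≤ (1 − θ/d)·‖a‖₁ for every a with coordinate sum 0. -/

import Mathlib

/-- if `P` is an `(m+1)×(d+1)` nonnegative matrix with columns
summing to `1`, and there is `θ > 0` such that for every pair of columns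
`j₁, j₂` there is a row `i₀` with `P i₀ j₁ ≥ θ` and `P i₀ j₂ ≥ θ`, then for
every `a` with coordinate sum `0`, `‖Pa‖₁ ≤ (1 - θ/d)·‖a‖₁`. -/
theorem stmt_18 (m d : ℕ) (hd : 1 ≤ d)
    (P : Matrix (Fin (m + 1)) (Fin (d + 1)) ℝ)
    (hnn : ∀ i j, 0 ≤ P i j)
    (hcol : ∀ j, ∑ i, P i j = 1)
    (θ : ℝ) (hθ : 0 < θ)
    (hpair : ∀ j₁ j₂ : Fin (d + 1), ∃ i₀ : Fin (m + 1), θ ≤ P i₀ j₁ ∧ θ ≤ P i₀ j₂)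
    (a : Fin (d + 1) → ℝ) (ha : ∑ j, a j = 0) :
    ∑ i, |∑ j, P i j * a j| ≤ (1 - θ / d) * ∑ j, |a j| := by
  classical
  set f : Fin (d + 1) → ℝ := fun j => max (a j) 0 with hfdef
  set g : Fin (d + 1) → ℝ := fun j => max (-a j) 0 with hgdef
  have hf : ∀ j, 0 ≤ f j := fun j => le_max_right _ _
  have hg : ∀ j, 0 ≤ g j := fun j => le_max_right _ _
  have hfg : ∀ j, f j - g j = a j := fun j => max_zero_sub_max_neg_zero_eq_self (a j)
  have habs : ∀ j, f j + g j = |a j| := fun j => max_zero_add_max_neg_zero_eq_abs_self (a j)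
  set S : ℝ := ∑ j, f j with hSdef
  have hS0 : 0 ≤ S := Finset.sum_nonneg fun j _ => hf j
  have hT : ∑ j, g j = S := by
    have h1 : S - ∑ j, g j = 0 := by
      rw [← Finset.sum_sub_distrib]
      simp only [hfg]; exact ha
    linarith
  have habsSum : ∑ j, |a j| = 2 * S := by
    have : ∑ j, |a j| = ∑ j, (f j + g j) := by
      apply Finset.sum_congr rfl; intro j _; rw [habs]
    rw [this, Finset.sum_add_distrib, hT]; ring
  set b : Fin (m + 1) → ℝ := fun i => ∑ j, P i j * f j with hbdef
  set c : Fin (m + 1) → ℝ := fun i => ∑ j, P i j * g j with hcdef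
  have hb0 : ∀ i, 0 ≤ b i := fun i =>
    Finset.sum_nonneg fun j _ => mul_nonneg (hnn i j) (hf j)
  have hc0 : ∀ i, 0 ≤ c i := fun i =>
    Finset.sum_nonneg fun j _ => mul_nonneg (hnn i j) (hg j)
  have hsumb : ∑ i, b i = S := by
    rw [hbdef]
    rw [Finset.sum_comm]
    have : ∀ j : Fin (d + 1), ∑ i, P i j * f j = f j := by
      intro j; rw [← Finset.sum_mul, hcol j, one_mul]
    rw [Finset.sum_congr rfl fun j _ => this j]
  have hsumc : ∑ i, c i = S := by
    rw [hcdef]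
    rw [Finset.sum_comm]
    have : ∀ j : Fin (d + 1), ∑ i, P i j * g j = g j := by
      intro j; rw [← Finset.sum_mul, hcol j, one_mul]
    rw [Finset.sum_congr rfl fun j _ => this j, hT]
  have hrow : ∀ i, ∑ j, P i j * a j = b i - c i := by
    intro i
    rw [hbdef, hcdef]
    simp only [← Finset.sum_sub_distrib, ← mul_sub]
    apply Finset.sum_congr rfl; intro j _; rw [hfg]
  -- the overlap bound
  have hoverlap : ∀ j₁ j₂ : Fin (d + 1), θ ≤ ∑ i, min (P i j₁) (P i j₂) := by
    intro j₁ j₂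
    obtain ⟨i₀, h₁, h₂⟩ := hpair j₁ j₂
    calc θ ≤ min (P i₀ j₁) (P i₀ j₂) := le_min h₁ h₂
      _ ≤ ∑ i, min (P i j₁) (P i j₂) :=
        Finset.single_le_sum (fun i _ => le_min (hnn i j₁) (hnn i j₂)) (Finset.mem_univ i₀)
  -- key: S * min (b i) (c i) ≥ ∑ j₁ j₂, f j₁ * g j₂ * min (P i j₁) (P i j₂)
  have hkey : ∀ i, ∑ j₁, ∑ j₂, f j₁ * g j₂ * min (P i j₁) (P i j₂) ≤ S * min (b i) (c i) := by
    intro i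
    have hb' : b i = ∑ j, P i j * f j := rfl
    have hc' : c i = ∑ j, P i j * g j := rfl
    rw [mul_min_of_nonneg _ _ hS0]
    apply le_min
    · have e1 : S * b i = ∑ j₁, ∑ j₂, f j₁ * g j₂ * P i j₁ := by
        rw [hb', ← hT, mul_comm, Finset.sum_mul_sum]
        exact Finset.sum_congr rfl fun j₁ _ => Finset.sum_congr rfl fun j₂ _ => by ring
      rw [e1]
      apply Finset.sum_le_sum; intro j₁ _
      apply Finset.sum_le_sum; intro j₂ _
      exact mul_le_mul_of_nonneg_left (min_le_left _ _) (mul_nonneg (hf j₁) (hg j₂))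
    · have e2 : S * c i = ∑ j₁, ∑ j₂, f j₁ * g j₂ * P i j₂ := by
        rw [hc', hSdef, Finset.sum_mul_sum]
        exact Finset.sum_congr rfl fun j₁ _ => Finset.sum_congr rfl fun j₂ _ => by ring
      rw [e2]
      apply Finset.sum_le_sum; intro j₁ _
      apply Finset.sum_le_sum; intro j₂ _
      exact mul_le_mul_of_nonneg_left (min_le_right _ _) (mul_nonneg (hf j₁) (hg j₂))
  set M : ℝ := ∑ i, min (b i) (c i) with hMdef
  have hM0 : 0 ≤ M := Finset.sum_nonneg fun i _ => le_min (hb0 i) (hc0 i)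
  have hMlb : θ * S * S ≤ S * M := by
    have h1 : ∑ i, ∑ j₁, ∑ j₂, f j₁ * g j₂ * min (P i j₁) (P i j₂) ≤ S * M := by
      rw [hMdef, Finset.mul_sum]
      exact Finset.sum_le_sum fun i _ => hkey i
    have h2 : θ * S * S ≤ ∑ i, ∑ j₁, ∑ j₂, f j₁ * g j₂ * min (P i j₁) (P i j₂) := by
      rw [Finset.sum_comm]
      have h3 : ∀ j₁, ∑ i, ∑ j₂, f j₁ * g j₂ * min (P i j₁) (P i j₂)
          = ∑ j₂, f j₁ * g j₂ * ∑ i, min (P i j₁) (P i j₂) := by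
        intro j₁
        rw [Finset.sum_comm]
        apply Finset.sum_congr rfl; intro j₂ _
        rw [Finset.mul_sum]
      rw [Finset.sum_congr rfl fun j₁ _ => h3 j₁]
      have h4 : θ * S * S = ∑ j₁, ∑ j₂, f j₁ * g j₂ * θ := by
        simp only [← Finset.sum_mul, ← Finset.mul_sum]
        rw [hT]; ring
      rw [h4]
      apply Finset.sum_le_sum; intro j₁ _
      apply Finset.sum_le_sum; intro j₂ _
      exact mul_le_mul_of_nonneg_left (hoverlap j₁ j₂) (mul_nonneg (hf j₁) (hg j₂))
    linarith
  have hθM : θ * S ≤ M := by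
    rcases eq_or_lt_of_le hS0 with hS | hS
    · rw [← hS]; simpa using hM0
    · have := (mul_le_mul_iff_of_pos_left hS).mp (by linarith [hMlb] : S * (θ * S) ≤ S * M)
      exact this
  have hLHS : ∑ i, |∑ j, P i j * a j| = 2 * S - 2 * M := by
    have : ∀ i, |∑ j, P i j * a j| = b i + c i - 2 * min (b i) (c i) := by
      intro i
      rw [hrow i]
      rcases le_total (b i) (c i) with h | h
      · rw [min_eq_left h, abs_of_nonpos (by linarith)]; ring
      · rw [min_eq_right h, abs_of_nonneg (by linarith)]; ring
    rw [Finset.sum_congr rfl fun i _ => this i]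
    rw [Finset.sum_sub_distrib, Finset.sum_add_distrib, hsumb, hsumc, ← Finset.mul_sum, ← hMdef]
    ring
  have hd1 : (1:ℝ) ≤ (d:ℝ) := by exact_mod_cast hd
  have hθd : θ / d ≤ θ := by
    rw [div_le_iff₀ (by linarith : (0:ℝ) < (d:ℝ))]
    nlinarith
  rw [hLHS, habsSum]
  nlinarith [hθM, hS0, hθ.le]
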